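/- arXiv:1411.1735 — 4 statements merged into one kernel-verified Lean document; each statement's English description precedes it below -/
import Mathlib

section
/- Let p ∈ ℝ³ with r = ‖p‖ > 0 and let A be its cross-product matrix. Then exp(A) · ∫₀¹ exp(-y·A) dy = I + ((r - sin r)/r³)·A² + ((1 - cos r)/r²)·A. -/
open Matrix

/-- The cross-product matrix of `p`: `A.mulVec v = p ×₃ v`. -/
def crossMatrix (p : Fin 3 → ℝ) : Matrix (Fin 3) (Fin 3) ℝ :=
  !![0, -p 2, p 1; p 2, 0, -p 0; -p 1, p 0, 0]

open NormedSpace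
open scoped Nat

lemma crossMatrix_cube (p : Fin 3 → ℝ) (r : ℝ)
    (hr2 : r ^ 2 = p 0 ^ 2 + p 1 ^ 2 + p 2 ^ 2) :
    (crossMatrix p) ^ 3 = (-(r ^ 2)) • crossMatrix p := by
  rw [hr2]
  ext i j
  fin_cases i <;> fin_cases j <;>
    simp [crossMatrix, pow_succ, Matrix.mul_apply, Fin.sum_univ_succ] <;> ring

lemma crossMatrix_pow_odd (p : Fin 3 → ℝ) (r : ℝ)
    (hr2 : r ^ 2 = p 0 ^ 2 + p 1 ^ 2 + p 2 ^ 2) (n : ℕ) :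
    (crossMatrix p) ^ (2 * n + 1) = ((-1 : ℝ) ^ n * r ^ (2 * n)) • crossMatrix p := by
  induction n with
  | zero => simp
  | succ n ih =>
    have h3 := crossMatrix_cube p r hr2
    have : 2 * (n + 1) + 1 = (2 * n + 1) + 2 := by ring
    rw [this, pow_add, ih, smul_mul_assoc, ← pow_succ', show (2:ℕ)+1 = 3 from rfl, h3,
      smul_smul]
    congr 1
    ring

lemma crossMatrix_pow_even (p : Fin 3 → ℝ) (r : ℝ)
    (hr2 : r ^ 2 = p 0 ^ 2 + p 1 ^ 2 + p 2 ^ 2) (n : ℕ) :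
    (crossMatrix p) ^ (2 * n + 2) = ((-1 : ℝ) ^ n * r ^ (2 * n)) • (crossMatrix p) ^ 2 := by
  have := crossMatrix_pow_odd p r hr2 n
  rw [show 2 * n + 2 = (2 * n + 1) + 1 by ring, pow_succ, this, smul_mul_assoc, ← sq]

lemma exp_crossMatrix (p : Fin 3 → ℝ) (r : ℝ) (hr : 0 ≤ r)
    (hr2 : r ^ 2 = p 0 ^ 2 + p 1 ^ 2 + p 2 ^ 2) :
    exp (crossMatrix p) =
      1 + (Real.sin r / r) • crossMatrix p
        + ((1 - Real.cos r) / r ^ 2) • (crossMatrix p) ^ 2 := by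
  rcases hr.eq_or_lt with h0 | h0
  · have h1 : p 0 = 0 := by nlinarith [sq_nonneg (p 1), sq_nonneg (p 2)]
    have h2 : p 1 = 0 := by nlinarith [sq_nonneg (p 0), sq_nonneg (p 2)]
    have h3 : p 2 = 0 := by nlinarith [sq_nonneg (p 0), sq_nonneg (p 1)]
    have hA : crossMatrix p = 0 := by
      ext i j; fin_cases i <;> fin_cases j <;> simp [crossMatrix, h1, h2, h3, Matrix.vecHead, Matrix.vecTail]
    rw [hA, ← h0]
    simp [exp_zero]
  · have hrne : r ≠ 0 := ne_of_gt h0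
    set A := crossMatrix p with hA
    rw [exp_eq_tsum (𝕂 := ℝ)]
    refine HasSum.tsum_eq ?_
    have hodd : HasSum (fun n : ℕ => (((2 * n + 1)! : ℝ)⁻¹) • A ^ (2 * n + 1))
        ((Real.sin r / r) • A) := by
      have hs := (Real.hasSum_sin r).div_const r
      have hs' : HasSum (fun n : ℕ => ((-1 : ℝ) ^ n * r ^ (2 * n) / (2 * n + 1)!)) 
          (Real.sin r / r) := by
        convert hs using 2 with n
        · rfl
        field_simp
        ring
      have := hs'.smul_const A
      convert this using 2 with n
      rw [crossMatrix_pow_odd p r hr2, smul_smul]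
      congr 1
      field_simp
    have hcshift : HasSum (fun n : ℕ => ((-1 : ℝ) ^ (n + 1) * r ^ (2 * (n + 1)) / (2 * (n + 1))!))
        (Real.cos r - 1) := by
      refine (hasSum_nat_add_iff (f := fun n : ℕ => ((-1 : ℝ) ^ n * r ^ (2 * n) / (2 * n)!)) 1).mpr ?_
      simpa using Real.hasSum_cos r
    have hc' : HasSum (fun n : ℕ => ((-1 : ℝ) ^ n * r ^ (2 * n) / (2 * n + 2)!))
        ((1 - Real.cos r) / r ^ 2) := by
      have := (hcshift.neg).div_const (r ^ 2)
      convert this using 2 with n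
      · rfl
      · have : ((2 : ℕ) * (n + 1))! = ((2 * n + 2 : ℕ))! := by norm_num; ring_nf
        rw [show (2 * (n + 1)) = 2 * n + 2 by ring]
        field_simp
        ring
      · ring
    have heven : HasSum (fun n : ℕ => (((2 * n)! : ℝ)⁻¹) • A ^ (2 * n))
        (1 + ((1 - Real.cos r) / r ^ 2) • A ^ 2) := by
      have hshift : HasSum (fun n : ℕ => (((2 * (n + 1))! : ℝ)⁻¹) • A ^ (2 * (n + 1)))
          (((1 - Real.cos r) / r ^ 2) • A ^ 2) := by
        have := hc'.smul_const (A ^ 2)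
        convert this using 2 with n
        rw [show 2 * (n + 1) = 2 * n + 2 by ring, crossMatrix_pow_even p r hr2, smul_smul]
        congr 1
        field_simp
      have := (hasSum_nat_add_iff
        (f := fun n : ℕ => (((2 * n)! : ℝ)⁻¹) • A ^ (2 * n)) 1).mp hshift
      simpa only [Finset.sum_range_one, Nat.mul_zero, pow_zero, Nat.factorial_zero,
        Nat.cast_one, inv_one, one_smul, add_comm] using this
    have := HasSum.even_add_odd (f := fun n : ℕ => ((n ! : ℝ)⁻¹) • A ^ n) heven hodd
    convert this using 1
    · rfl
    abel

lemma exp_neg_smul_crossMatrix (p : Fin 3 → ℝ) (r : ℝ) (hr : 0 < r)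
    (hr2 : r ^ 2 = p 0 ^ 2 + p 1 ^ 2 + p 2 ^ 2) (y : ℝ) :
    exp (-(y • crossMatrix p)) =
      1 + (-(Real.sin (y * r) / r)) • crossMatrix p
        + ((1 - Real.cos (y * r)) / r ^ 2) • (crossMatrix p) ^ 2 := by
  have hrne : r ≠ 0 := ne_of_gt hr
  set q : Fin 3 → ℝ := fun i => -(y * p i) with hq
  have hCq : crossMatrix q = (-y) • crossMatrix p := by
    ext i j
    fin_cases i <;> fin_cases j <;>
      simp [crossMatrix, hq, Matrix.smul_apply] <;> ring
  have h1 : -(y • crossMatrix p) = crossMatrix q := by rw [hCq, neg_smul]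
  have hq2 : (|y| * r) ^ 2 = q 0 ^ 2 + q 1 ^ 2 + q 2 ^ 2 := by
    simp only [hq, mul_pow, sq_abs]
    rw [hr2]; ring
  have hsin : Real.sin (|y| * r) / (|y| * r) * (-y) = -(Real.sin (y * r) / r) := by
    rcases abs_cases y with ⟨h, hy0⟩ | ⟨h, hy0⟩
    · rcases eq_or_ne y 0 with rfl | hy
      · simp
      · rw [h]; field_simp
    · have hy : y ≠ 0 := ne_of_lt hy0
      rw [h, neg_mul, Real.sin_neg]
      field_simp
  have hcos : (1 - Real.cos (|y| * r)) / (|y| * r) ^ 2 * (-y) ^ 2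
      = (1 - Real.cos (y * r)) / r ^ 2 := by
    rcases abs_cases y with ⟨h, hy0⟩ | ⟨h, hy0⟩
    · rcases eq_or_ne y 0 with rfl | hy
      · simp
      · rw [h]; field_simp
    · have hy : y ≠ 0 := ne_of_lt hy0
      rw [h, neg_mul, Real.cos_neg]
      field_simp
  rw [h1, exp_crossMatrix q (|y| * r) (by positivity) hq2, hCq, smul_pow, smul_smul, smul_smul,
    hsin, hcos]

lemma aux_int (r : ℝ) (hr : 0 < r) (a b c : ℝ) :
    ∫ y in (0:ℝ)..1, (a + -(Real.sin (y * r) / r) * b + (1 - Real.cos (y * r)) / r ^ 2 * c)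
      = a + -((1 - Real.cos r) / r ^ 2) * b + (r - Real.sin r) / r ^ 3 * c := by
  have hrne : r ≠ 0 := ne_of_gt hr
  have hI1 : ∫ y in (0:ℝ)..1, Real.sin (y * r) = (1 - Real.cos r) / r := by
    rw [intervalIntegral.integral_comp_mul_right Real.sin hrne]
    simp [integral_sin]
    field_simp
  have hI2 : ∫ y in (0:ℝ)..1, Real.cos (y * r) = Real.sin r / r := by
    rw [intervalIntegral.integral_comp_mul_right Real.cos hrne]
    simp [integral_cos]
    field_simp
  have hfun : ∀ y : ℝ, a + -(Real.sin (y * r) / r) * b + (1 - Real.cos (y * r)) / r ^ 2 * c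
      = (a + c / r ^ 2) + ((-b / r) * Real.sin (y * r) + (-c / r ^ 2) * Real.cos (y * r)) := by
    intro y; field_simp; ring
  simp only [hfun]
  have hs : IntervalIntegrable (fun y : ℝ => (-b / r) * Real.sin (y * r))
      MeasureTheory.volume 0 1 := by apply Continuous.intervalIntegrable; fun_prop
  have hc : IntervalIntegrable (fun y : ℝ => (-c / r ^ 2) * Real.cos (y * r))
      MeasureTheory.volume 0 1 := by apply Continuous.intervalIntegrable; fun_prop
  rw [intervalIntegral.integral_add (intervalIntegrable_const) (hs.add hc),
    intervalIntegral.integral_add hs hc, intervalIntegral.integral_const_mul,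
    intervalIntegral.integral_const_mul, hI1, hI2]
  simp
  field_simp
  ring

theorem stmt_4 (p : Fin 3 → ℝ) (r : ℝ) (hr : 0 < r)
    (hr2 : r ^ 2 = p 0 ^ 2 + p 1 ^ 2 + p 2 ^ 2) :
    NormedSpace.exp (crossMatrix p) *
        (Matrix.of fun i j : Fin 3 =>
          ∫ y in (0:ℝ)..1, NormedSpace.exp (-(y • crossMatrix p)) i j) =
      1 + ((r - Real.sin r) / r ^ 3) • (crossMatrix p) ^ 2
        + ((1 - Real.cos r) / r ^ 2) • crossMatrix p := by
  have hrne : r ≠ 0 := ne_of_gt hr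
  set A := crossMatrix p with hAdef
  have h3 : A ^ 3 = (-(r ^ 2)) • A := crossMatrix_cube p r hr2
  have h4 : A ^ 4 = (-(r ^ 2)) • A ^ 2 := by
    rw [show (4 : ℕ) = 3 + 1 from rfl, pow_succ, h3, smul_mul_assoc, ← sq]
  have hAA : A * A = A ^ 2 := (sq A).symm
  have hA3 : A * A ^ 2 = (-(r ^ 2)) • A := by rw [← pow_succ']; exact h3
  have hA3' : A ^ 2 * A = (-(r ^ 2)) • A := by rw [← pow_succ]; exact h3
  have hA4 : A ^ 2 * A ^ 2 = (-(r ^ 2)) • A ^ 2 := by rw [← pow_add]; exact h4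
  have hexp := exp_crossMatrix p r hr.le hr2
  have hint : (Matrix.of fun i j : Fin 3 => ∫ y in (0:ℝ)..1, exp (-(y • A)) i j)
      = 1 + (-((1 - Real.cos r) / r ^ 2)) • A + ((r - Real.sin r) / r ^ 3) • A ^ 2 := by
    ext i j
    have hy : ∀ y : ℝ, (exp (-(y • A))) i j
        = (1 : Matrix (Fin 3) (Fin 3) ℝ) i j + -(Real.sin (y * r) / r) * A i j
          + (1 - Real.cos (y * r)) / r ^ 2 * (A ^ 2) i j := by
      intro y
      rw [hAdef, exp_neg_smul_crossMatrix p r hr hr2 y]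
      simp [Matrix.add_apply, Matrix.smul_apply, smul_eq_mul]
    simp only [Matrix.of_apply, hy]
    rw [aux_int r hr]
    simp [Matrix.add_apply, Matrix.smul_apply, smul_eq_mul]
  rw [hexp, hint, ← hAdef]
  simp only [mul_add, add_mul, one_mul, mul_one, smul_mul_assoc, mul_smul_comm, smul_smul,
    hAA, hA3, hA3', hA4]
  match_scalars
  · ring
  · field_simp
    ring_nf
    linear_combination (1 : ℝ) * Real.sin_sq_add_cos_sq r
  · field_simp
    ring_nf
end

section
/- Suppose d : ℝ × ℝ → ℝ³ (depending on s and t) is twice continuously differentiable and there exist continuously differentiable vector fields κ, ω : ℝ × ℝ → ℝ³ such that ∂ₛd = κ × d and ∂ₜd = ω × d at every point. Then (∂ₜκ - ∂ₛω - ω × κ) × d = 0 at every point. -/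
open Matrix

noncomputable def crossL : (Fin 3 → ℝ) →L[ℝ] (Fin 3 → ℝ) →L[ℝ] (Fin 3 → ℝ) :=
  LinearMap.toContinuousLinearMap <|
    (LinearMap.toContinuousLinearMap :
        ((Fin 3 → ℝ) →ₗ[ℝ] (Fin 3 → ℝ)) ≃ₗ[ℝ] ((Fin 3 → ℝ) →L[ℝ] (Fin 3 → ℝ))).toLinearMap
      ∘ₗ crossProduct

@[simp] lemma crossL_apply (a b : Fin 3 → ℝ) : crossL a b = a ⨯₃ b := rfl

lemma fderiv_cross {f g : ℝ × ℝ → Fin 3 → ℝ} {z : ℝ × ℝ}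
    (hf : DifferentiableAt ℝ f z) (hg : DifferentiableAt ℝ g z) (v : ℝ × ℝ) :
    fderiv ℝ (fun y => f y ⨯₃ g y) z v
      = f z ⨯₃ (fderiv ℝ g z v) + (fderiv ℝ f z v) ⨯₃ g z := by
  have h : fderiv ℝ (fun y => crossL (f y) (g y)) z
      = crossL.precompR (ℝ × ℝ) (f z) (fderiv ℝ g z)
        + crossL.precompL (ℝ × ℝ) (fderiv ℝ f z) (g z) :=
    crossL.fderiv_of_bilinear hf hg
  have h2 : (fun y => crossL (f y) (g y)) = fun y => f y ⨯₃ g y := by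
    funext y; simp
  rw [h2] at h
  rw [h]
  simp [ContinuousLinearMap.precompR, ContinuousLinearMap.precompL]

theorem stmt_6 (d κ ω : ℝ × ℝ → Fin 3 → ℝ)
    (hd : ContDiff ℝ 2 d) (hκ : ContDiff ℝ 1 κ) (hω : ContDiff ℝ 1 ω)
    (hs : ∀ z : ℝ × ℝ, fderiv ℝ d z (1, 0) = κ z ⨯₃ d z)
    (ht : ∀ z : ℝ × ℝ, fderiv ℝ d z (0, 1) = ω z ⨯₃ d z) :
    ∀ z : ℝ × ℝ,
      (fderiv ℝ κ z (0, 1) - fderiv ℝ ω z (1, 0) - ω z ⨯₃ κ z) ⨯₃ d z = 0 := by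
  intro z
  have hd1 : Differentiable ℝ d := hd.differentiable (by norm_num)
  have hκ1 : Differentiable ℝ κ := hκ.differentiable one_ne_zero
  have hω1 : Differentiable ℝ ω := hω.differentiable one_ne_zero
  have hfd : Differentiable ℝ (fderiv ℝ d) :=
    (hd.fderiv_right (m := 1) (by norm_num)).differentiable one_ne_zero
  -- derivative of y ↦ fderiv d y v at z applied to w equals second derivative
  have happ : ∀ v w : ℝ × ℝ, fderiv ℝ (fun y => fderiv ℝ d y v) z w
      = fderiv ℝ (fderiv ℝ d) z w v := by
    intro v w
    have : fderiv ℝ (fun y => fderiv ℝ d y v) z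
        = (fderiv ℝ (fderiv ℝ d) z).flip v := by
      have := fderiv_clm_apply (c := fderiv ℝ d) (u := fun _ => v)
        (hfd z) (differentiableAt_const v)
      simpa using this
    rw [this]; rfl
  have hsymm : fderiv ℝ (fderiv ℝ d) z (1, 0) (0, 1)
      = fderiv ℝ (fderiv ℝ d) z (0, 1) (1, 0) :=
    (hd.contDiffAt.isSymmSndFDerivAt (by simp [minSmoothness_of_isRCLikeNormedField])) _ _
  -- compute ∂_t (∂_s d) via hs
  have e1 : fderiv ℝ (fderiv ℝ d) z (0, 1) (1, 0)
      = κ z ⨯₃ (ω z ⨯₃ d z) + (fderiv ℝ κ z (0, 1)) ⨯₃ d z := by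
    rw [← happ]
    have : (fun y => fderiv ℝ d y (1, 0)) = fun y => κ y ⨯₃ d y := funext hs
    rw [this, fderiv_cross (hκ1 z) (hd1 z), ht]
  have e2 : fderiv ℝ (fderiv ℝ d) z (1, 0) (0, 1)
      = ω z ⨯₃ (κ z ⨯₃ d z) + (fderiv ℝ ω z (1, 0)) ⨯₃ d z := by
    rw [← happ]
    have : (fun y => fderiv ℝ d y (0, 1)) = fun y => ω y ⨯₃ d y := funext ht
    rw [this, fderiv_cross (hω1 z) (hd1 z), hs]
  have key : κ z ⨯₃ (ω z ⨯₃ d z) + (fderiv ℝ κ z (0, 1)) ⨯₃ d z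
      = ω z ⨯₃ (κ z ⨯₃ d z) + (fderiv ℝ ω z (1, 0)) ⨯₃ d z := by
    rw [← e1, ← e2, hsymm]
  have expand : (fderiv ℝ κ z (0, 1) - fderiv ℝ ω z (1, 0) - ω z ⨯₃ κ z) ⨯₃ d z
      = (fderiv ℝ κ z (0, 1)) ⨯₃ d z - (fderiv ℝ ω z (1, 0)) ⨯₃ d z
        - (ω z ⨯₃ (κ z ⨯₃ d z) - κ z ⨯₃ (ω z ⨯₃ d z)) := by
    rw [map_sub, map_sub, LinearMap.sub_apply, LinearMap.sub_apply, cross_cross]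
  rw [expand]
  linear_combination key
end

section
/- Let p : ℝ² → ℝ³ be C¹ with ‖p(s,t)‖ = r(s,t) > 0, and define κ(s,t) = ∂ₛp + ((r - sin r)/r³)(⟨p, ∂ₛp⟩p - r² ∂ₛp) - ((1 - cos r)/r²)(p × ∂ₛp). Then κ = M(p)·∂ₛp where M(p) = I + ((r - sin r)/r³)A² - ((1 - cos r)/r²)A with A the cross-product matrix of p, and det M(p) = 2(1 - cos r)/r². -/
open Matrix

lemma crossMatrix_det (u : Fin 3 → ℝ) (a b : ℝ) :
    (1 + a • (crossMatrix u) ^ 2 - b • crossMatrix u).det =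
      (1 - a * (u 0 ^ 2 + u 1 ^ 2 + u 2 ^ 2)) ^ 2
        + b ^ 2 * (u 0 ^ 2 + u 1 ^ 2 + u 2 ^ 2) := by
  simp only [crossMatrix, pow_two, Matrix.det_fin_three, Matrix.add_apply,
    Matrix.sub_apply, Matrix.smul_apply, Matrix.one_fin_three, Matrix.mul_apply,
    Fin.sum_univ_three, Matrix.cons_val', Matrix.cons_val_zero, Matrix.cons_val_one,
    Matrix.head_cons, Matrix.empty_val', Matrix.cons_val_fin_one, Matrix.head_fin_const,
    Matrix.cons_val_two, Matrix.tail_cons, Matrix.of_apply, smul_eq_mul]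
  norm_num
  ring

theorem stmt_13 (p : ℝ × ℝ → Fin 3 → ℝ) (hp : ContDiff ℝ 1 p)
    (r : ℝ × ℝ → ℝ) (hr : ∀ z, 0 < r z)
    (hr2 : ∀ z, r z ^ 2 = p z 0 ^ 2 + p z 1 ^ 2 + p z 2 ^ 2)
    (κ : ℝ × ℝ → Fin 3 → ℝ)
    (hκ : κ = fun z =>
      fderiv ℝ p z (1, 0)
        + ((r z - Real.sin (r z)) / r z ^ 3) •
            ((p z ⬝ᵥ fderiv ℝ p z (1, 0)) • p z - r z ^ 2 • fderiv ℝ p z (1, 0))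
        - ((1 - Real.cos (r z)) / r z ^ 2) • (p z ⨯₃ fderiv ℝ p z (1, 0)))
    (M : ℝ × ℝ → Matrix (Fin 3) (Fin 3) ℝ)
    (hM : M = fun z =>
      1 + ((r z - Real.sin (r z)) / r z ^ 3) • (crossMatrix (p z)) ^ 2
        - ((1 - Real.cos (r z)) / r z ^ 2) • crossMatrix (p z)) :
    (∀ z, κ z = (M z).mulVec (fderiv ℝ p z (1, 0))) ∧
      ∀ z, (M z).det = 2 * (1 - Real.cos (r z)) / r z ^ 2 := by
  subst hκ hM
  constructor
  · intro z
    have hrne : r z ≠ 0 := (hr z).ne'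
    funext i
    set v := fderiv ℝ p z (1, 0) with hv
    have h2 := hr2 z
    fin_cases i
    · simp [crossMatrix, Matrix.mulVec, crossProduct, dotProduct,
        Fin.sum_univ_three, Matrix.one_apply, pow_two, Matrix.mul_apply,
        Matrix.sub_apply, Matrix.add_apply, Matrix.smul_apply]
      linear_combination (-((r z - Real.sin (r z)) / r z ^ 3) * v 0) * h2
    · simp [crossMatrix, Matrix.mulVec, crossProduct, dotProduct,
        Fin.sum_univ_three, Matrix.one_apply, pow_two, Matrix.mul_apply,
        Matrix.sub_apply, Matrix.add_apply, Matrix.smul_apply]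
      linear_combination (-((r z - Real.sin (r z)) / r z ^ 3) * v 1) * h2
    · simp [crossMatrix, Matrix.mulVec, crossProduct, dotProduct,
        Fin.sum_univ_three, Matrix.one_apply, pow_two, Matrix.mul_apply,
        Matrix.sub_apply, Matrix.add_apply, Matrix.smul_apply]
      linear_combination (-((r z - Real.sin (r z)) / r z ^ 3) * v 2) * h2
  · intro z
    have hrne : r z ≠ 0 := (hr z).ne'
    have h2 := (hr2 z).symm
    have hsc := Real.sin_sq_add_cos_sq (r z)
    rw [crossMatrix_det, h2]
    field_simp
    nlinarith [hsc, sq_nonneg (r z), pow_pos (hr z) 8, mul_pos (pow_pos (hr z) 8) (pow_pos (hr z) 2)]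
end

section
/- For p ∈ ℝ³ with r = ‖p‖ > 0 not an integer multiple of 2π, the matrix M(p) = I + ((r - sin r)/r³)·A² - ((1 - cos r)/r²)·A is invertible, where A is the cross-product matrix of p. -/
set_option maxHeartbeats 1000000


open Matrix

theorem stmt_14 (p : Fin 3 → ℝ) (r : ℝ) (hr : 0 < r)
    (hr2 : r ^ 2 = p 0 ^ 2 + p 1 ^ 2 + p 2 ^ 2)
    (hmult : ∀ k : ℤ, r ≠ 2 * Real.pi * k) :
    IsUnit (1 + ((r - Real.sin r) / r ^ 3) • (crossMatrix p) ^ 2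
      - ((1 - Real.cos r) / r ^ 2) • crossMatrix p) := by
  have hrne : r ≠ 0 := hr.ne'
  have hcos : Real.cos r ≠ 1 := by
    intro h
    obtain ⟨n, hn⟩ := (Real.cos_eq_one_iff r).mp h
    exact hmult n (by linarith [hn])
  have hcoslt : Real.cos r < 1 := lt_of_le_of_ne (Real.cos_le_one r) hcos
  set a : ℝ := (r - Real.sin r) / r ^ 3 with ha
  set b : ℝ := (1 - Real.cos r) / r ^ 2 with hb
  have hM : 1 + a • (crossMatrix p) ^ 2 - b • crossMatrix p =
      !![1 - a*(p 1^2 + p 2^2), a*(p 0*p 1) + b*p 2, a*(p 0*p 2) - b*p 1;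
         a*(p 0*p 1) - b*p 2, 1 - a*(p 0^2 + p 2^2), a*(p 1*p 2) + b*p 0;
         a*(p 0*p 2) + b*p 1, a*(p 1*p 2) - b*p 0, 1 - a*(p 0^2 + p 1^2)] := by
    ext i j
    fin_cases i <;> fin_cases j <;>
      simp [crossMatrix, pow_two, Matrix.mul_apply, Fin.sum_univ_three,
        Matrix.one_apply] <;> ring_nf <;> tauto
  rw [Matrix.isUnit_iff_isUnit_det, isUnit_iff_ne_zero, hM]
  rw [Matrix.det_fin_three]
  simp only [Matrix.cons_val_zero, Matrix.cons_val_one, Matrix.head_cons,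
    Matrix.cons_val_two, Matrix.tail_cons, Matrix.head_fin_const, Matrix.of_apply,
    Matrix.cons_val', Matrix.empty_val', Matrix.cons_val_fin_one]
  have key : (1 - a * (p 1 ^ 2 + p 2 ^ 2)) * (1 - a * (p 0 ^ 2 + p 2 ^ 2)) * (1 - a * (p 0 ^ 2 + p 1 ^ 2)) -
              (1 - a * (p 1 ^ 2 + p 2 ^ 2)) * (a * (p 1 * p 2) + b * p 0) * (a * (p 1 * p 2) - b * p 0) -
            (a * (p 0 * p 1) + b * p 2) * (a * (p 0 * p 1) - b * p 2) * (1 - a * (p 0 ^ 2 + p 1 ^ 2)) +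
          (a * (p 0 * p 1) + b * p 2) * (a * (p 1 * p 2) + b * p 0) * (a * (p 0 * p 2) + b * p 1) +
        (a * (p 0 * p 2) - b * p 1) * (a * (p 0 * p 1) - b * p 2) * (a * (p 1 * p 2) - b * p 0) -
      (a * (p 0 * p 2) - b * p 1) * (1 - a * (p 0 ^ 2 + p 2 ^ 2)) * (a * (p 0 * p 2) + b * p 1)
      = (1 - a * r ^ 2) ^ 2 + b ^ 2 * r ^ 2 := by
    rw [hr2]; ring
  rw [key]
  have hs := Real.sin_sq_add_cos_sq r
  have harr : 1 - a * r ^ 2 = Real.sin r / r := by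
    rw [ha]; field_simp; ring
  have hbr : b ^ 2 * r ^ 2 = (1 - Real.cos r) ^ 2 / r ^ 2 := by
    rw [hb]; field_simp
  rw [harr, hbr]
  have : Real.sin r / r * (Real.sin r / r) + (1 - Real.cos r) ^ 2 / r ^ 2
      = 2 * (1 - Real.cos r) / r ^ 2 := by
    field_simp
    linear_combination hs
  rw [pow_two, this]
  have h1 : 0 < 1 - Real.cos r := by linarith
  positivity
end
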